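/- Let E be a real inner product space and let h : E → ℝ be a convex differentiable function. Suppose α ∈ (0, 1] satisfies α·D_h(x, y) ≤ D_h(y, x) for all x, y ∈ E. Let x₁, x₂ ∈ E, let γ ≥ 0 satisfy α²(1 + γ) − γ > 0, and set y := x₁ + γ(x₁ − x₂). Then D_h(x₁, y) ≤ [γ(γα + 1 + γ) / (α²(1 + γ) − γ)] · D_h(x₂, x₁). -/

import Mathlib

open RealInnerProductSpace

lemma grad_ineq {E : Type*} [NormedAddCommGroup E] [InnerProductSpace ℝ E]
    (h : E → ℝ) (h' : E → E)
    (hconv : ConvexOn ℝ Set.univ h)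
    (hdiff : ∀ x, HasFDerivAt h (innerSL ℝ (h' x)) x)
    (u v : E) : h v + ⟪h' v, u - v⟫ ≤ h u := by
  set g : ℝ → E := fun t : ℝ => v + t • (u - v) with hg
  have hgd : ∀ t : ℝ, HasDerivAt g (u - v) t := by
    intro t
    simpa [hg] using ((hasDerivAt_id t).smul_const (u - v)).const_add v
  have hcomp : HasDerivAt (h ∘ g) ⟪h' v, u - v⟫ 0 := by
    have h0 : g 0 = v := by simp [hg]
    have := (h0 ▸ hdiff v : HasFDerivAt h (innerSL ℝ (h' v)) (g 0)).comp_hasDerivAt 0 (hgd 0)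
    simpa using this
  have hgc : ConvexOn ℝ Set.univ (h ∘ g) := by
    have := hconv.comp_affineMap (AffineMap.lineMap v u)
    have heq : (h ∘ g) = h ∘ (AffineMap.lineMap v u) := by
      funext t
      simp [hg, AffineMap.lineMap_apply, add_comm]
    rw [heq]
    simpa using this
  have := hgc.le_slope_of_hasDerivAt (Set.mem_univ 0) (Set.mem_univ 1) one_pos hcomp
  rw [slope_def_field] at this
  simp only [Function.comp, hg, one_smul, zero_smul, add_zero, sub_zero, div_one] at this
  have hu : v + (u - v) = u := by abel
  rw [hu] at this
  linarith


/-- Quantitative extrapolation bound: let `h : E → ℝ` be convex and differentiable with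
gradient `h'`, and suppose `α ∈ (0, 1]` satisfies `α * D_h(x, y) ≤ D_h(y, x)` for all
`x, y`, where `D_h(x, y) = h x - h y - ⟪h' y, x - y⟫`. Let `γ ≥ 0` satisfy
`α²(1 + γ) - γ > 0` and set `y = x₁ + γ • (x₁ - x₂)`. Then
`D_h(x₁, y) ≤ (γ(γα + 1 + γ) / (α²(1 + γ) - γ)) * D_h(x₂, x₁)`. -/
theorem extrapolation_bound
    {E : Type*} [NormedAddCommGroup E] [InnerProductSpace ℝ E]
    (h : E → ℝ) (h' : E → E)
    (hconv : ConvexOn ℝ Set.univ h)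
    (hdiff : ∀ x, HasFDerivAt h (innerSL ℝ (h' x)) x)
    (α : ℝ) (hα0 : 0 < α) (hα1 : α ≤ 1)
    (hsym : ∀ x y : E,
      α * (h x - h y - ⟪h' y, x - y⟫) ≤ h y - h x - ⟪h' x, y - x⟫)
    (x₁ x₂ : E) (γ : ℝ) (hγ : 0 ≤ γ)
    (hden : 0 < α ^ 2 * (1 + γ) - γ) :
    h x₁ - h (x₁ + γ • (x₁ - x₂)) -
        ⟪h' (x₁ + γ • (x₁ - x₂)), x₁ - (x₁ + γ • (x₁ - x₂))⟫ ≤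
      (γ * (γ * α + 1 + γ) / (α ^ 2 * (1 + γ) - γ)) *
        (h x₂ - h x₁ - ⟪h' x₁, x₂ - x₁⟫) := by
  have grad := grad_ineq h h' hconv hdiff
  set y : E := x₁ + γ • (x₁ - x₂) with hy
  set p : ℝ := ⟪h' x₁, x₁ - x₂⟫ with hp
  set q : ℝ := ⟪h' x₂, x₁ - x₂⟫ with hq
  set r : ℝ := ⟪h' y, x₁ - x₂⟫ with hr
  have ey1 : x₁ - y = (-γ) • (x₁ - x₂) := by rw [hy]; module
  have ey2 : y - x₁ = γ • (x₁ - x₂) := by rw [hy]; module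
  have ey3 : x₂ - y = (-(1+γ)) • (x₁ - x₂) := by rw [hy]; module
  have ey4 : y - x₂ = (1+γ) • (x₁ - x₂) := by rw [hy]; module
  have ey5 : x₂ - x₁ = (-1 : ℝ) • (x₁ - x₂) := by module
  -- nonnegativity facts
  have hA : h y + (-γ) * r ≤ h x₁ := by
    have := grad x₁ y; rwa [ey1, real_inner_smul_right, ← hr] at this
  have hB : h x₁ + γ * p ≤ h y := by
    have := grad y x₁; rwa [ey2, real_inner_smul_right, ← hp] at this
  have hC : h x₁ + (-1) * p ≤ h x₂ := by
    have := grad x₂ x₁; rwa [ey5, real_inner_smul_right, ← hp] at this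
  have hG : h x₂ + q ≤ h x₁ := grad x₁ x₂
  have hF : h y + (-(1+γ)) * r ≤ h x₂ := by
    have := grad x₂ y; rwa [ey3, real_inner_smul_right, ← hr] at this
  have hJ : h x₂ + (1+γ) * q ≤ h y := by
    have := grad y x₂; rwa [ey4, real_inner_smul_right, ← hq] at this
  -- symmetry facts
  have m1 : α * (h x₁ - h y - (-γ) * r) ≤ h y - h x₁ - γ * p := by
    have := hsym x₁ y
    rwa [ey1, ey2, real_inner_smul_right, real_inner_smul_right, ← hp, ← hr] at this
  have m2 : α * (h y - h x₁ - γ * p) ≤ h x₁ - h y - (-γ) * r := by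
    have := hsym y x₁
    rwa [ey1, ey2, real_inner_smul_right, real_inner_smul_right, ← hp, ← hr] at this
  have m3 : α * (h x₁ - h x₂ - q) ≤ h x₂ - h x₁ - (-1) * p := by
    have := hsym x₁ x₂
    rwa [ey5, real_inner_smul_right, ← hp, ← hq] at this
  have m5 : α * (h x₂ - h y - (-(1+γ)) * r) ≤ h y - h x₂ - (1+γ) * q := by
    have := hsym x₂ y
    rwa [ey3, ey4, real_inner_smul_right, real_inner_smul_right, ← hq, ← hr] at this
  -- rewrite the goal
  rw [ey1, real_inner_smul_right, ey5, real_inner_smul_right, ← hp, ← hr,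
    div_mul_eq_mul_div, le_div_iff₀ hden]
  have hCnn : 0 ≤ h x₂ - h x₁ - (-1) * p := by linarith
  rcases le_total α γ with hc | hc
  · -- case α ≤ γ
    have t5 : 0 ≤ α * γ * ((h y - h x₂ - (1+γ) * q) - α * (h x₂ - h y - (-(1+γ)) * r)) :=
      mul_nonneg (mul_nonneg hα0.le hγ) (by linarith)
    have t2 : 0 ≤ (γ - α) * ((h x₁ - h y - (-γ) * r) - α * (h y - h x₁ - γ * p)) :=
      mul_nonneg (by linarith) (by linarith)
    have t3 : 0 ≤ γ * (1+γ) * ((h x₂ - h x₁ - (-1) * p) - α * (h x₁ - h x₂ - q)) :=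
      mul_nonneg (mul_nonneg hγ (by linarith)) (by linarith)
    have key : (α ^ 2 * (1 + γ) - γ + α) * (h x₁ - h y - (-γ) * r) ≤
        γ * (1 + γ + α * γ - α ^ 2) * (h x₂ - h x₁ - (-1) * p) := by
      nlinarith [t5, t2, t3]
    have hint1 : 0 ≤ (α ^ 2 * (1 + γ) - γ) *
        (γ * (1 + γ + α * γ - α ^ 2) * (h x₂ - h x₁ - (-1) * p) -
          (α ^ 2 * (1 + γ) - γ + α) * (h x₁ - h y - (-γ) * r)) :=
      mul_nonneg hden.le (by linarith)
    have c2 : 0 ≤ γ * (α * (γ * α + 1 + γ) + (α ^ 2 * (1 + γ) - γ) * α ^ 2) := by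
      have h1 : (0:ℝ) ≤ γ * α + 1 + γ := by
        have := mul_nonneg hγ hα0.le; linarith
      exact mul_nonneg hγ (add_nonneg (mul_nonneg hα0.le h1)
        (mul_nonneg hden.le (sq_nonneg α)))
    have hint2 : 0 ≤ γ * (α * (γ * α + 1 + γ) + (α ^ 2 * (1 + γ) - γ) * α ^ 2) *
        (h x₂ - h x₁ - (-1) * p) := mul_nonneg c2 hCnn
    have hpos : (0:ℝ) < α ^ 2 * (1 + γ) - γ + α := by linarith
    have hT : 0 ≤ (α ^ 2 * (1 + γ) - γ + α) *
        (γ * (γ * α + 1 + γ) * (h x₂ - h x₁ - (-1) * p) -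
          (h x₁ - h y - (-γ) * r) * (α ^ 2 * (1 + γ) - γ)) := by
      linarith [hint1, hint2]
    have := (mul_nonneg_iff_of_pos_left hpos).mp hT
    linarith
  · -- case γ ≤ α
    have t5 : 0 ≤ α * γ * ((h y - h x₂ - (1+γ) * q) - α * (h x₂ - h y - (-(1+γ)) * r)) :=
      mul_nonneg (mul_nonneg hα0.le hγ) (by linarith)
    have t1 : 0 ≤ α * (α - γ) * ((h y - h x₁ - γ * p) - α * (h x₁ - h y - (-γ) * r)) :=
      mul_nonneg (mul_nonneg hα0.le (by linarith)) (by linarith)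
    have t3 : 0 ≤ γ * (1+γ) * ((h x₂ - h x₁ - (-1) * p) - α * (h x₁ - h x₂ - q)) :=
      mul_nonneg (mul_nonneg hγ (by linarith)) (by linarith)
    have key : α ^ 2 * (1 + α) * (h x₁ - h y - (-γ) * r) ≤
        γ * (1 + γ + α * γ - α ^ 2) * (h x₂ - h x₁ - (-1) * p) := by
      nlinarith [t5, t1, t3]
    have hint1 : 0 ≤ (α ^ 2 * (1 + γ) - γ) *
        (γ * (1 + γ + α * γ - α ^ 2) * (h x₂ - h x₁ - (-1) * p) -
          α ^ 2 * (1 + α) * (h x₁ - h y - (-γ) * r)) :=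
      mul_nonneg hden.le (by linarith)
    have c2 : 0 ≤ γ * ((γ * α + 1 + γ) * (α ^ 3 + γ * (1 - α ^ 2))
        + (α ^ 2 * (1 + γ) - γ) * α ^ 2) := by
      have h1 : (0:ℝ) ≤ γ * α + 1 + γ := by
        have := mul_nonneg hγ hα0.le; linarith
      have h2 : (0:ℝ) ≤ α ^ 3 + γ * (1 - α ^ 2) := by
        have ha3 := pow_pos hα0 3
        have hα2 : α ^ 2 ≤ 1 := pow_le_one₀ hα0.le hα1
        have := mul_nonneg hγ (by linarith : (0:ℝ) ≤ 1 - α ^ 2)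
        linarith
      exact mul_nonneg hγ (add_nonneg (mul_nonneg h1 h2)
        (mul_nonneg hden.le (sq_nonneg α)))
    have hint2 : 0 ≤ γ * ((γ * α + 1 + γ) * (α ^ 3 + γ * (1 - α ^ 2))
        + (α ^ 2 * (1 + γ) - γ) * α ^ 2) * (h x₂ - h x₁ - (-1) * p) :=
      mul_nonneg c2 hCnn
    have hpos : (0:ℝ) < α ^ 2 * (1 + α) := by positivity
    have hT : 0 ≤ α ^ 2 * (1 + α) *
        (γ * (γ * α + 1 + γ) * (h x₂ - h x₁ - (-1) * p) -
          (h x₁ - h y - (-γ) * r) * (α ^ 2 * (1 + γ) - γ)) := by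
      linarith [hint1, hint2]
    have := (mul_nonneg_iff_of_pos_left hpos).mp hT
    linarith
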